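/- Along any solution of ẋ = -y + a y x⁴, ẏ = x + a x³ y² staying in the region a x⁴ - 1 > 0 (respectively using a fixed real branch of the fourth root), the functions u = x/(a x⁴ - 1)^{1/4}, v = y/(a x⁴ - 1)^{1/4} satisfy u̇ = -v, v̇ = u. -/

import Mathlib

/-- u = x/(ax⁴-1)^{1/4}, v = y/(ax⁴-1)^{1/4} linearizes ẋ = -y+ayx⁴,
ẏ = x+ax³y² on the region ax⁴-1 > 0. -/
theorem stmt_16 (a : ℝ) (x y : ℝ → ℝ)
    (hx : ∀ t, HasDerivAt x (-(y t) + a * y t * (x t) ^ 4) t)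
    (hy : ∀ t, HasDerivAt y (x t + a * (x t) ^ 3 * (y t) ^ 2) t)
    (hpos : ∀ t, a * (x t) ^ 4 - 1 > 0) :
    ∀ t,
      HasDerivAt (fun s => x s / (a * (x s) ^ 4 - 1) ^ ((1:ℝ)/4))
        (-(y t / (a * (x t) ^ 4 - 1) ^ ((1:ℝ)/4))) t ∧
      HasDerivAt (fun s => y s / (a * (x s) ^ 4 - 1) ^ ((1:ℝ)/4))
        (x t / (a * (x t) ^ 4 - 1) ^ ((1:ℝ)/4)) t := by
  intro t
  have hP : (0:ℝ) < a * (x t) ^ 4 - 1 := hpos t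
  have hw : HasDerivAt (fun s => a * (x s) ^ 4 - 1)
      (a * (4 * (x t) ^ 3 * (-(y t) + a * y t * (x t) ^ 4))) t := by
    have := (((hx t).pow 4).const_mul a).sub_const 1
    simpa using this
  have hg := hw.rpow_const (p := (1:ℝ)/4) (Or.inl hP.ne')
  have hne : (a * (x t) ^ 4 - 1) ^ ((1:ℝ)/4) ≠ 0 :=
    (Real.rpow_pos_of_pos hP _).ne'
  set P := a * (x t) ^ 4 - 1 with hPdef
  set c := P ^ ((1:ℝ)/4) with hcdef
  have hc4 : c ^ 4 = P := by
    rw [hcdef, ← Real.rpow_natCast (P ^ ((1:ℝ)/4)) 4, ← Real.rpow_mul hP.le]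
    norm_num
  have hsub : P ^ ((1:ℝ)/4 - 1) = c / P := by
    rw [Real.rpow_sub hP, Real.rpow_one, hcdef]
  have h4 : a * x t ^ 4 = c ^ 4 + 1 := by rw [hc4, hPdef]; ring
  constructor
  · have hu := (hx t).div hg hne
    convert hu using 1
    · rfl
    · rfl
    · rfl
    rw [← hPdef, hsub, ← hcdef, ← hc4]
    have hc : c ≠ 0 := hne
    field_simp
    linear_combination (y t * (4 * c ^ 2 - c ^ 4 + 4 * c ^ 6 - 1 + (a * x t ^ 4 + c ^ 4 + 1) * (1 - 4 * c ^ 2)) + 4 * y t * c ^ 2 * (a * x t ^ 4)) * h4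
  · have hv := (hy t).div hg hne
    convert hv using 1
    · rfl
    · rfl
    · rfl
    rw [← hPdef, hsub, ← hcdef, ← hc4]
    have hc : c ≠ 0 := hne
    field_simp
    linear_combination (x t ^ 3 * a * y t ^ 2 * (1 - 4 * c ^ 2) + 4 * x t ^ 3 * a * y t ^ 2 * c ^ 2) * h4
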